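/- arXiv:0808.1408 — 4 statements merged into one kernel-verified Lean document; each statement's English description precedes it below -/
import Mathlib

section
/- For positive reals a, b, the function ρ ↦ Σ_{j≥0} (b + ja)^{-(1+ρ)} - (1/a)·(1/ρ) extends continuously to ρ = 0; i.e., the series Σ_{j≥0} 1/(b+ja)^{1+ρ} equals (1/a)(1/ρ) + φ(ρ) where φ has a finite limit as ρ → 0⁺. -/
open Filter Topology Complex Set HurwitzZeta Finset

/-- Dirichlet §2: Σ_{j≥0} (b+ja)^{-(1+ρ)} = (1/a)(1/ρ) + φ(ρ) with φ having a
finite limit as ρ → 0⁺. -/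
theorem arithmetic_progression_zeta_pole (a b : ℝ) (ha : 0 < a) (hb : 0 < b) :
    ∃ ℓ : ℝ, Filter.Tendsto
      (fun ρ : ℝ => (∑' j : ℕ, (b + j * a) ^ (-(1 + ρ))) - (1 / a) * (1 / ρ))
      (nhdsWithin 0 (Set.Ioi 0)) (nhds ℓ) := by
  have hx : 0 < b / a := div_pos hb ha
  set x : ℝ := b / a with hxdef
  set m : ℕ := ⌈x⌉₊ - 1 with hm
  have hn1 : 1 ≤ ⌈x⌉₊ := Nat.one_le_iff_ne_zero.mpr (Nat.ceil_pos.mpr hx).ne'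
  have hmcast : (m : ℝ) = (⌈x⌉₊ : ℝ) - 1 := by
    rw [hm, Nat.cast_sub hn1, Nat.cast_one]
  set c : ℝ := x - m with hc
  have hc0 : 0 < c := by
    have h1 : (⌈x⌉₊ : ℝ) < x + 1 := Nat.ceil_lt_add_one hx.le
    rw [hc, hmcast]; linarith
  have hc1 : c ≤ 1 := by
    have := Nat.le_ceil x
    rw [hc, hmcast]; linarith
  have hcI : c ∈ Icc (0:ℝ) 1 := ⟨hc0.le, hc1⟩
  have hxc : (m : ℝ) + c = x := by rw [hc]; ring
  -- the complex-valued model function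
  set A : ℝ → ℂ := fun ρ => (a : ℂ) ^ (-((1:ℂ) + (ρ:ℂ))) with hA
  set S : ℝ → ℂ := fun ρ => ∑ k ∈ range m, 1 / ((k:ℂ) + c) ^ ((1:ℂ) + (ρ:ℂ)) with hS
  set V : ℝ → ℂ := fun ρ =>
    A ρ * (hurwitzZeta c ((1:ℂ) + (ρ:ℂ)) - S ρ) with hV
  -- summation identity
  have key : ∀ ρ : ℝ, 0 < ρ →
      HasSum (fun j : ℕ => (((b + j * a) ^ (-(1 + ρ)) : ℝ) : ℂ)) (V ρ) := by
    intro ρ hρ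
    set s : ℂ := (1:ℂ) + (ρ:ℂ) with hs
    have hsre : 1 < s.re := by simp [hs, hρ]
    have H1 := hasSum_hurwitzZeta_of_one_lt_re hcI hsre
    have H2 : HasSum (fun j : ℕ => 1 / (((j + m : ℕ) : ℂ) + c) ^ s)
        (hurwitzZeta c s - S ρ) := by
      refine (hasSum_nat_add_iff (f := fun n : ℕ => 1 / ((n:ℂ) + c) ^ s) m).mpr ?_
      simpa [hS, hs] using H1
    have H3 := H2.mul_left ((a:ℂ) ^ (-s))
    have hVeq : V ρ = (a:ℂ) ^ (-s) * (hurwitzZeta c s - S ρ) := by rw [hV, hA]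
    rw [hVeq]
    have hterm : (fun j : ℕ => (((b + j * a) ^ (-(1 + ρ)) : ℝ) : ℂ))
        = fun j : ℕ => (a:ℂ) ^ (-s) * (1 / (((j + m : ℕ):ℂ) + c) ^ s) := by
      funext j
      have hjx : (0:ℝ) < (j:ℝ) + x := by positivity
      have h1 : b + j * a = a * ((j:ℝ) + x) := by
        field_simp [hxdef]; linarith [show a * x = b by rw [hxdef]; field_simp [ha.ne']]
      rw [h1, Real.mul_rpow ha.le hjx.le, ofReal_mul, ofReal_cpow ha.le,
        ofReal_cpow hjx.le]
      have he : ((-(1 + ρ) : ℝ) : ℂ) = -s := by rw [hs]; push_cast; ring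
      have hbase : ((((j:ℝ) + x : ℝ)) : ℂ) = (((j + m : ℕ) : ℂ) + c) := by
        rw [← hxc]
        push_cast
        ring
      rw [he, hbase]
      simp [cpow_neg, one_div]
    rw [hterm]
    exact H3
  -- the correction function h and its derivative at 0
  set h : ℝ → ℂ := fun ρ => A ρ * (Gammaℝ ((1:ℂ) + (ρ:ℂ)))⁻¹ with hh
  have ha0 : (a : ℂ) ≠ 0 := ofReal_ne_zero.mpr ha.ne'
  have hh0 : h 0 = (a:ℂ)⁻¹ := by
    simp [hh, hA, Gammaℝ_one, cpow_neg, cpow_one]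
  have hdiffC : DifferentiableAt ℂ
      (fun z : ℂ => (a:ℂ) ^ (-(1+z)) * (Gammaℝ (1+z))⁻¹) 0 := by
    apply DifferentiableAt.mul
    · exact (((differentiable_id.const_add (1:ℂ)).neg 0).const_cpow (Or.inl ha0))
    · exact (differentiable_Gammaℝ_inv.comp ((differentiable_id.const_add (1:ℂ)))) 0
  have hdiff : DifferentiableAt ℝ h 0 := by
    have : h = (fun z : ℂ => (a:ℂ) ^ (-(1+z)) * (Gammaℝ (1+z))⁻¹) ∘
        (fun ρ : ℝ => (ρ:ℂ)) := rfl
    rw [this]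
    exact DifferentiableAt.comp (𝕜 := ℝ) 0
      (by simpa using hdiffC.restrictScalars ℝ) ofRealCLM.differentiableAt
  have hslope : Tendsto (fun ρ : ℝ => (h ρ - h 0) * ((ρ:ℂ))⁻¹)
      (nhdsWithin 0 (Set.Ioi 0)) (nhds (deriv h 0)) := by
    have h1 := hasDerivAt_iff_tendsto_slope.mp hdiff.hasDerivAt
    have h2 : Tendsto (slope h 0) (nhdsWithin 0 (Set.Ioi 0)) (nhds (deriv h 0)) :=
      h1.mono_left (nhdsWithin_mono 0 (fun y hy => ne_of_gt hy))
    refine h2.congr fun ρ => ?_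
    simp [slope, real_smul, sub_zero]
    ring
  -- tendsto of pieces
  have hgc : Tendsto (fun ρ : ℝ => (1:ℂ) + (ρ:ℂ)) (nhds 0) (nhds 1) := by
    exact (continuous_const.add continuous_ofReal).tendsto' 0 1 (by simp)
  have TZ : Tendsto (fun ρ : ℝ => hurwitzZeta c ((1:ℂ)+(ρ:ℂ))
        - 1 / (((1:ℂ)+(ρ:ℂ)) - 1) / Gammaℝ ((1:ℂ)+(ρ:ℂ)))
      (nhds 0) (nhds (hurwitzZeta c 1)) :=
    (tendsto_hurwitzZeta_sub_one_div_nhds_one c).comp hgc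
  have TA : Tendsto A (nhds 0) (nhds ((a:ℂ)⁻¹)) := by
    have c1 : ContinuousAt (fun z : ℂ => (a:ℂ) ^ (-(1+z))) 0 :=
      ((((differentiable_id.const_add (1:ℂ)).neg 0).const_cpow
        (Or.inl ha0))).continuousAt
    have c2 : ContinuousAt A 0 := by
      have : A = (fun z : ℂ => (a:ℂ) ^ (-(1+z))) ∘ (fun ρ : ℝ => (ρ:ℂ)) := rfl
      rw [this]
      exact ContinuousAt.comp (by simpa using c1) continuous_ofReal.continuousAt
    have := c2.tendsto
    simpa [hA, cpow_neg, cpow_one] using this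
  have TS : Tendsto S (nhds 0) (nhds (S 0)) := by
    refine Continuous.tendsto ?_ 0
    rw [hS]
    apply continuous_finset_sum
    intro k _
    have hkcr : ((k:ℝ) + c) ≠ 0 := by positivity
    have hkc : ((k:ℂ) + (c:ℂ)) ≠ 0 := by
      rw [show ((k:ℂ) + (c:ℂ)) = (((k:ℝ) + c : ℝ) : ℂ) by push_cast; ring]
      exact ofReal_ne_zero.mpr hkcr
    have hcont : Continuous fun ρ : ℝ => ((k:ℂ) + c) ^ ((1:ℂ) + (ρ:ℂ)) :=
      (continuous_iff_continuousAt.mpr fun z => continuousAt_const_cpow hkc).comp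
        (continuous_const.add continuous_ofReal)
    have hne : ∀ ρ : ℝ, ((k:ℂ) + c) ^ ((1:ℂ) + (ρ:ℂ)) ≠ 0 := fun ρ => by
      simp [cpow_eq_zero_iff, hkc]
    simp only [one_div]; exact hcont.inv₀ hne
  set L : ℂ := (a:ℂ)⁻¹ * hurwitzZeta c 1 - (a:ℂ)⁻¹ * S 0 + deriv h 0 with hL
  have TG : Tendsto (fun ρ : ℝ => A ρ * (hurwitzZeta c ((1:ℂ)+(ρ:ℂ))
        - 1 / (((1:ℂ)+(ρ:ℂ)) - 1) / Gammaℝ ((1:ℂ)+(ρ:ℂ))) - A ρ * S ρ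
        + (h ρ - h 0) * ((ρ:ℂ))⁻¹)
      (nhdsWithin 0 (Set.Ioi 0)) (nhds L) :=
    (((TA.mul TZ).sub (TA.mul TS)).mono_left nhdsWithin_le_nhds).add hslope
  have hid : ∀ ρ : ℝ, A ρ * (hurwitzZeta c ((1:ℂ)+(ρ:ℂ))
        - 1 / (((1:ℂ)+(ρ:ℂ)) - 1) / Gammaℝ ((1:ℂ)+(ρ:ℂ))) - A ρ * S ρ
        + (h ρ - h 0) * ((ρ:ℂ))⁻¹
      = V ρ - (((1/a) * (1/ρ) : ℝ) : ℂ) := by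
    intro ρ
    rw [hh0, hV]
    simp only [hh, add_sub_cancel_left]
    push_cast
    ring
  have heq : ∀ ρ ∈ Set.Ioi (0:ℝ),
      (∑' j : ℕ, (b + j * a) ^ (-(1 + ρ))) - (1 / a) * (1 / ρ)
        = (V ρ - (((1/a) * (1/ρ) : ℝ) : ℂ)).re := by
    intro ρ hρ
    have h1 : HasSum (fun j : ℕ => (b + j * a) ^ (-(1 + ρ))) ((V ρ).re) := by
      simpa using (key ρ hρ).mapL reCLM
    rw [h1.tsum_eq]
    simp
  refine ⟨L.re, ?_⟩
  have TG' : Tendsto (fun ρ : ℝ => V ρ - (((1/a) * (1/ρ) : ℝ) : ℂ))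
      (nhdsWithin 0 (Set.Ioi 0)) (nhds L) := TG.congr fun ρ => hid ρ
  have Tre := (Complex.continuous_re.tendsto L).comp TG'
  refine Tendsto.congr' ?_ Tre
  filter_upwards [self_mem_nhdsWithin] with ρ hρ
  exact (heq ρ hρ).symm
end

section
/- For any real α with 0 < α < 1, ∫₀¹ dx/(x - e^{2απi}) = log(2 sin(απ)) + (π/2)(1 - 2α)·i. -/
/-- Dirichlet §4: ∫₀¹ dx/(x - e^{2απi}) = log(2 sin απ) + (π/2)(1-2α)√-1. -/
theorem integral_inv_sub_root_of_unity (α : ℝ) (h0 : 0 < α) (h1 : α < 1) :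
    ∫ x in (0:ℝ)..1, (1 : ℂ) / ((x : ℂ) - Complex.exp (2 * α * Real.pi * Complex.I)) =
      (Real.log (2 * Real.sin (α * Real.pi)) : ℂ) +
        ((Real.pi / 2 : ℝ) : ℂ) * ((1 - 2 * α : ℝ) : ℂ) * Complex.I := by
  have hπ := Real.pi_pos
  have hc : (2 * (α:ℂ) * (Real.pi:ℂ) * Complex.I : ℂ)
      = ((2 * α * Real.pi : ℝ) : ℂ) * Complex.I := by push_cast; ring
  rw [hc]
  set θ : ℝ := 2 * α * Real.pi with hθ
  set c : ℂ := Complex.exp ((θ:ℂ) * Complex.I) with hcdef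
  have hcre : c.re = Real.cos θ := by simp [hcdef, Complex.exp_ofReal_mul_I_re]
  have hcim : c.im = Real.sin θ := by simp [hcdef, Complex.exp_ofReal_mul_I_im]
  have hθ0 : 0 < θ := by rw [hθ]; positivity
  have hθ2 : θ < 2 * Real.pi := by rw [hθ]; nlinarith
  have hslit : ∀ x : ℝ, 0 ≤ x → 0 < ((x:ℂ) - c).re ∨ ((x:ℂ) - c).im ≠ 0 := by
    intro x hx
    by_cases hs : Real.sin θ = 0
    · left
      have hθπ : θ = Real.pi := by
        rcases Real.sin_eq_zero_iff.mp hs with ⟨n, hn⟩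
        have : (n:ℝ) = 1 := by
          by_contra h
          rcases lt_or_gt_of_ne h with h' | h'
          · have h2 : (n:ℝ) ≤ 0 := by
              have : n < 1 := by exact_mod_cast h'
              have : n ≤ 0 := by omega
              exact_mod_cast this
            nlinarith
          · have h2 : (2:ℝ) ≤ (n:ℝ) := by
              have : 1 < n := by exact_mod_cast h'
              have : 2 ≤ n := by omega
              exact_mod_cast this
            nlinarith
        nlinarith [hn]
      have hre : c.re = -1 := by rw [hcre, hθπ, Real.cos_pi]
      simp [Complex.sub_re, hre]
      linarith
    · right
      simp [Complex.sub_im, hcim]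
      simpa [Complex.ofReal_im] using hs
  have hne : ∀ x : ℝ, 0 ≤ x → (x:ℂ) - c ≠ 0 := by
    intro x hx h
    rcases hslit x hx with h' | h' <;> simp [h] at h' ⊢
  have hderiv : ∀ x ∈ Set.uIcc (0:ℝ) 1,
      HasDerivAt (fun x : ℝ => Complex.log ((x:ℂ) - c)) (1 / ((x:ℂ) - c)) x := by
    intro x hx
    have hx0 : (0:ℝ) ≤ x := by
      rcases Set.mem_uIcc.mp hx with ⟨h, _⟩ | ⟨h, _⟩ <;> linarith
    have hg : HasDerivAt (fun x : ℝ => (x:ℂ) - c) 1 x := by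
      simpa using (Complex.ofRealCLM.hasDerivAt (x := x)).sub_const c
    have hl := (Complex.hasDerivAt_log (hslit x hx0)).comp x hg
    rw [one_div]
    convert hl using 1
    · rfl
    · rfl
    · simp
  have hcont : IntervalIntegrable (fun x : ℝ => 1 / ((x:ℂ) - c)) MeasureTheory.volume 0 1 := by
    apply ContinuousOn.intervalIntegrable
    apply ContinuousOn.div continuousOn_const
    · exact (Complex.continuous_ofReal.continuousOn).sub continuousOn_const
    · intro x hx
      have hx0 : (0:ℝ) ≤ x := by
        rcases Set.mem_uIcc.mp hx with ⟨h, _⟩ | ⟨h, _⟩ <;> linarith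
      exact hne x hx0
  rw [intervalIntegral.integral_eq_sub_of_hasDerivAt hderiv hcont]
  have hsin : 0 < Real.sin (α * Real.pi) :=
    Real.sin_pos_of_pos_of_lt_pi (by positivity) (by nlinarith)
  have h0c : Complex.log (((0:ℝ):ℂ) - c) = ((θ - Real.pi : ℝ) : ℂ) * Complex.I := by
    have hceq : ((0:ℝ):ℂ) - c = Complex.exp (((θ - Real.pi : ℝ):ℂ) * Complex.I) := by
      push_cast
      rw [sub_mul, Complex.exp_sub]
      simp [hcdef, Complex.exp_pi_mul_I]
      push_cast
      ring
    rw [hceq, Complex.log_exp]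
    · simp; nlinarith
    · simp; nlinarith
  have h1c : Complex.log (((1:ℝ):ℂ) - c) =
      (Real.log (2 * Real.sin (α * Real.pi)) : ℂ) +
        ((α * Real.pi - Real.pi / 2 : ℝ) : ℂ) * Complex.I := by
    have hceq : ((1:ℝ):ℂ) - c =
        ((2 * Real.sin (α * Real.pi) : ℝ) : ℂ) *
          Complex.exp (((α * Real.pi - Real.pi / 2 : ℝ):ℂ) * Complex.I) := by
      apply Complex.ext
      · simp only [Complex.sub_re, Complex.ofReal_re, hcre, Complex.mul_re,
          Complex.ofReal_im, Complex.exp_ofReal_mul_I_re, Complex.exp_ofReal_mul_I_im,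
          zero_mul, sub_zero]
        rw [Real.cos_sub_pi_div_two, hθ]
        have : 2 * α * Real.pi = 2 * (α * Real.pi) := by ring
        rw [this, Real.cos_two_mul]
        nlinarith [Real.sin_sq_add_cos_sq (α * Real.pi)]
      · simp only [Complex.sub_im, Complex.ofReal_im, hcim, Complex.mul_im,
          Complex.ofReal_re, Complex.exp_ofReal_mul_I_re, Complex.exp_ofReal_mul_I_im,
          zero_mul, add_zero, zero_sub, zero_add]
        rw [Real.sin_sub_pi_div_two, hθ]
        have : 2 * α * Real.pi = 2 * (α * Real.pi) := by ring
        rw [this, Real.sin_two_mul]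
        ring
    rw [hceq, Complex.log_ofReal_mul (by positivity) (Complex.exp_ne_zero _),
      Complex.log_exp]
    · simp; nlinarith
    · simp; nlinarith
  rw [h1c, h0c, hθ]
  push_cast
  ring
end

section
/- Let p be a prime with p ≡ 1 (mod 4). Writing g, h for the integers with 2^{(p+1)/2} Π_a sin(aπ/p) = g - h√p and 2^{(p+1)/2} Π_b sin(bπ/p) = g + h√p (a over quadratic residues, b over nonresidues in (0,p)), one has g² - p h² = 4p; consequently p divides g, and writing g = pk we get h² - pk² = -4, so h ≠ 0 and the ratio Π_b sin(bπ/p) / Π_a sin(aπ/p) = (k√p + h)/(k√p - h) ≠ 1. -/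
open Finset Complex

lemma abs_one_sub_exp (θ : ℝ) : ‖1 - Complex.exp (θ * I)‖ = 2 * |Real.sin (θ/2)| := by
  have key : 1 - Complex.exp (θ * I)
      = -Complex.exp ((θ/2 : ℝ) * I) * (2 * I * Complex.sin ((θ/2 : ℝ))) := by
    rw [Complex.sin]
    have h1 : -(↑(θ/2) : ℂ) * I + ↑(θ/2) * I = 0 := by ring
    have h2 : (↑(θ/2) : ℂ) * I + ↑(θ/2) * I = ↑θ * I := by push_cast; ring
    calc 1 - Complex.exp (θ * I)
        = Complex.exp (-(↑(θ/2)) * I + ↑(θ/2) * I) - Complex.exp (↑(θ/2) * I + ↑(θ/2) * I) := by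
          rw [h1, h2, Complex.exp_zero]
      _ = _ := by
          rw [Complex.exp_add, Complex.exp_add]; ring_nf
          rw [Complex.I_sq]; ring
  rw [key, norm_mul, norm_neg, Complex.norm_exp_ofReal_mul_I, one_mul, norm_mul, norm_mul,
    Complex.norm_two, Complex.norm_I, mul_one, ← Complex.ofReal_sin, Complex.norm_real, Real.norm_eq_abs]

lemma prod_two_sin (n : ℕ) (hn : 1 ≤ n) :
    ∏ m ∈ Finset.Ioo 0 n, (2 * Real.sin (m * Real.pi / n)) = n := by
  obtain ⟨n', rfl⟩ : ∃ n', n = n' + 1 := ⟨n - 1, by omega⟩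
  have hprim := Complex.isPrimitiveRoot_exp (n' + 1) (by omega)
  have key := hprim.prod_one_sub_pow_eq_order
  have habs := congrArg (‖·‖) key
  rw [norm_prod] at habs
  have hrhs : ‖(n' : ℂ) + 1‖ = (n' : ℝ) + 1 := by
    rw [← Complex.ofReal_natCast, ← Complex.ofReal_one, ← Complex.ofReal_add,
      Complex.norm_real, Real.norm_eq_abs, _root_.abs_of_nonneg (by positivity)]
  rw [hrhs] at habs
  have hterm : ∀ k ∈ Finset.range n',
      ‖1 - Complex.exp (2 * Real.pi * Complex.I / ((n' + 1 : ℕ) : ℂ)) ^ (k + 1)‖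
        = 2 * Real.sin ((k + 1) * Real.pi / (n' + 1)) := by
    intro k hk
    rw [Finset.mem_range] at hk
    rw [← Complex.exp_nat_mul]
    have harg : (k + 1 : ℕ) * (2 * ↑Real.pi * Complex.I / ((n' + 1 : ℕ) : ℂ))
        = ((2 * Real.pi * (k+1) / (n' + 1) : ℝ) : ℂ) * Complex.I := by
      have : (((n' + 1 : ℕ) : ℂ)) ≠ 0 := (Nat.cast_ne_zero (R := ℂ)).mpr (Nat.succ_ne_zero n')
      push_cast at this ⊢
      field_simp
    rw [harg, abs_one_sub_exp]
    have h2 : (2 * Real.pi * (k+1) / (n' + 1)) / 2 = (k + 1) * Real.pi / (n' + 1) := by ring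
    rw [h2, _root_.abs_of_nonneg]
    apply Real.sin_nonneg_of_nonneg_of_le_pi
    · positivity
    · rw [div_le_iff₀ (by positivity)]
      have hk' : (k:ℝ) ≤ n' := by exact_mod_cast hk.le
      nlinarith [Real.pi_pos]
  rw [Finset.prod_congr rfl hterm] at habs
  have hset : Finset.Ioo 0 (n' + 1) = Finset.Ico 1 (n' + 1) := by
    ext x; simp [Nat.lt_iff_add_one_le]
  rw [hset, Finset.prod_Ico_eq_prod_range]
  simp only [Nat.add_sub_cancel]
  have hcg : ∀ k ∈ Finset.range n', 2 * Real.sin (↑(1 + k) * Real.pi / ↑(n' + 1))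
      = 2 * Real.sin ((↑k + 1) * Real.pi / (↑n' + 1)) := by
    intro k _
    push_cast
    ring_nf
  rw [Finset.prod_congr rfl hcg, habs]
  push_cast
  ring

/-- Dirichlet §4: for p ≡ 1 (mod 4), with
2^{(p+1)/2} Π_a sin(aπ/p) = g - h√p and 2^{(p+1)/2} Π_b sin(bπ/p) = g + h√p,
one has g² - ph² = 4p, p ∣ g, and for g = pk: h² - pk² = -4, h ≠ 0, and
Π_b sin(bπ/p) / Π_a sin(aπ/p) = (k√p + h)/(k√p - h) ≠ 1. -/
theorem cyclotomic_pell_one_mod_four (p : ℕ) [Fact p.Prime] (hp : p % 4 = 1)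
    (g h : ℤ) (Pa Pb : ℝ)
    (hPa : Pa = ∏ m ∈ (Finset.Ioo 0 p).filter (fun m : ℕ => legendreSym p (m : ℤ) = 1),
      Real.sin (m * Real.pi / p))
    (hPb : Pb = ∏ m ∈ (Finset.Ioo 0 p).filter (fun m : ℕ => legendreSym p (m : ℤ) = -1),
      Real.sin (m * Real.pi / p))
    (hg : (2 : ℝ) ^ ((p + 1) / 2) * Pa = (g : ℝ) - (h : ℝ) * Real.sqrt p)
    (hh : (2 : ℝ) ^ ((p + 1) / 2) * Pb = (g : ℝ) + (h : ℝ) * Real.sqrt p) :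
    g ^ 2 - (p : ℤ) * h ^ 2 = 4 * p ∧ (p : ℤ) ∣ g ∧
      ∀ k : ℤ, g = (p : ℤ) * k →
        h ^ 2 - (p : ℤ) * k ^ 2 = -4 ∧ h ≠ 0 ∧
        Pb / Pa = ((k : ℝ) * Real.sqrt p + (h : ℝ)) / ((k : ℝ) * Real.sqrt p - (h : ℝ)) ∧
        Pb / Pa ≠ 1 := by
  have hprime : p.Prime := Fact.out
  have hp5 : 5 ≤ p := by
    have h2 := hprime.two_le
    rcases Nat.lt_or_ge p 5 with hlt | hge
    · interval_cases p <;> simp_all <;> omega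
    · exact hge
  have hsq : Real.sqrt p * Real.sqrt p = (p : ℝ) := Real.mul_self_sqrt (by positivity)
  -- split the full sine product
  have hsplit : Pa * Pb = ∏ m ∈ Finset.Ioo 0 p, Real.sin (m * Real.pi / p) := by
    rw [hPa, hPb]
    rw [← Finset.prod_filter_mul_prod_filter_not (Finset.Ioo 0 p)
      (fun m : ℕ => legendreSym p (m : ℤ) = 1)]
    have hfe : (Finset.Ioo 0 p).filter (fun m : ℕ => legendreSym p (m : ℤ) = -1)
        = (Finset.Ioo 0 p).filter (fun m : ℕ => ¬ legendreSym p (m : ℤ) = 1) := by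
      apply Finset.filter_congr
      intro m hm
      simp only [Finset.mem_Ioo] at hm
      have hne : ((m : ℤ) : ZMod p) ≠ 0 := by
        rw [Int.cast_natCast, Ne, ZMod.natCast_eq_zero_iff]
        exact fun hd => absurd (Nat.le_of_dvd hm.1 hd) (not_le.mpr hm.2)
      rcases legendreSym.eq_one_or_neg_one p hne with h1 | h1 <;> simp [h1]
    rw [hfe]
  -- full product value
  have hps : (2 : ℝ) ^ (p - 1) * ∏ m ∈ Finset.Ioo 0 p, Real.sin (m * Real.pi / p) = p := by
    have := prod_two_sin p (by omega)
    rw [Finset.prod_mul_distrib, Finset.prod_const, Nat.card_Ioo] at this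
    simpa using this
  -- main real identity
  have hmain : (g : ℝ) ^ 2 - p * h ^ 2 = 4 * p := by
    have h1 : ((2:ℝ)^((p+1)/2) * Pa) * ((2:ℝ)^((p+1)/2) * Pb)
        = ((g:ℝ) - h * Real.sqrt p) * ((g:ℝ) + h * Real.sqrt p) := by rw [hg, hh]
    have h2 : ((2:ℝ)^((p+1)/2) * Pa) * ((2:ℝ)^((p+1)/2) * Pb) = 2^(p+1) * (Pa * Pb) := by
      have he : (p+1)/2 + (p+1)/2 = p + 1 := by omega
      calc (2:ℝ)^((p+1)/2) * Pa * ((2:ℝ)^((p+1)/2) * Pb)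
          = ((2:ℝ)^((p+1)/2) * 2^((p+1)/2)) * (Pa * Pb) := by ring
        _ = 2^(p+1) * (Pa * Pb) := by rw [← pow_add, he]
    have h3 : (2:ℝ)^(p+1) * (Pa * Pb) = 4 * p := by
      have he2 : p + 1 = (p - 1) + 2 := by omega
      rw [he2, pow_add, hsplit]
      calc (2:ℝ)^(p-1) * 2^2 * ∏ m ∈ Finset.Ioo 0 p, Real.sin (m * Real.pi / p)
          = 4 * ((2:ℝ)^(p-1) * ∏ m ∈ Finset.Ioo 0 p, Real.sin (m * Real.pi / p)) := by ring
        _ = 4 * p := by rw [hps]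
    have h4 : ((g:ℝ) - h * Real.sqrt p) * ((g:ℝ) + h * Real.sqrt p) = 4 * p := by
      rw [← h1, h2, h3]
    linear_combination h4 + (h:ℝ)^2 * hsq
  have hZ : g ^ 2 - (p : ℤ) * h ^ 2 = 4 * p := by exact_mod_cast hmain
  have hdvd : (p : ℤ) ∣ g := by
    have hsq2 : (p : ℤ) ∣ g ^ 2 := ⟨4 + h ^ 2, by linarith⟩
    exact (Nat.prime_iff_prime_int.mp hprime).dvd_of_dvd_pow hsq2
  refine ⟨hZ, hdvd, fun k hk => ?_⟩
  have hpne : (p : ℤ) ≠ 0 := by positivity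
  have hpell : h ^ 2 - (p : ℤ) * k ^ 2 = -4 := by
    have : (p : ℤ) * (h ^ 2 - p * k ^ 2) = (p : ℤ) * (-4) := by
      rw [hk] at hZ; ring_nf; ring_nf at hZ; linarith
    exact mul_left_cancel₀ hpne this
  have hne : h ≠ 0 := by
    intro h0
    rw [h0] at hpell
    have hdvd4 : (p : ℤ) ∣ 4 := ⟨k ^ 2, by linarith⟩
    have := Int.le_of_dvd (by norm_num) hdvd4
    omega
  -- irrationality of sqrt p
  have hirr : Irrational (Real.sqrt p) := hprime.irrational_sqrt
  have hhr : (h : ℝ) ≠ 0 := Int.cast_ne_zero.mpr hne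
  have hden : (g : ℝ) - h * Real.sqrt p ≠ 0 := by
    intro h0
    apply hirr
    refine ⟨(g : ℚ) / (h : ℚ), ?_⟩
    push_cast
    field_simp
    linarith
  have hPane : Pa ≠ 0 := by
    intro h0
    rw [h0, mul_zero] at hg
    exact hden hg.symm
  have hr : Pb / Pa = ((g:ℝ) + h * Real.sqrt p) / ((g:ℝ) - h * Real.sqrt p) := by
    rw [← hg, ← hh, mul_div_mul_left _ _ (pow_ne_zero _ two_ne_zero)]
  have hgk : (g : ℝ) = p * k := by rw [hk]; push_cast; ring
  have hsp : Real.sqrt p ≠ 0 := by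
    have : (0:ℝ) < Real.sqrt p := Real.sqrt_pos.mpr (by positivity)
    exact ne_of_gt this
  have hnum : (g:ℝ) + h * Real.sqrt p = Real.sqrt p * ((k:ℝ) * Real.sqrt p + h) := by
    rw [hgk]; linear_combination -(k:ℝ) * hsq
  have hden2 : (g:ℝ) - h * Real.sqrt p = Real.sqrt p * ((k:ℝ) * Real.sqrt p - h) := by
    rw [hgk]; linear_combination -(k:ℝ) * hsq
  refine ⟨hpell, hne, ?_, ?_⟩
  · rw [hr, hnum, hden2, mul_div_mul_left _ _ hsp]
  · intro h1
    rw [hr, div_eq_one_iff_eq hden] at h1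
    have : (h:ℝ) * Real.sqrt p = 0 := by linarith
    rcases mul_eq_zero.mp this with h2 | h2
    · exact hhr h2
    · exact hsp h2
end

section
/- Let p be an odd prime and let χ be the quadratic character mod p (the Legendre symbol). Then L(1, χ) = Σ_{n≥1} (n/p)/n > 0; in particular L(1,χ) ≠ 0. -/
open Finset Filter Topology Real

namespace LOneQuad

/-- Abel summation bound: if the partial sums of `z` are bounded by `B` and `c` is an
antitone nonnegative sequence, then the partial sums of `c * z` are bounded by `B * c 0`. -/
lemma abel_bound {c z : ℕ → ℝ} {B : ℝ} (hB : 0 ≤ B)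
    (hc : ∀ ⦃i j⦄, i ≤ j → c j ≤ c i) (hc0 : ∀ i, 0 ≤ c i)
    (hz : ∀ k, |∑ i ∈ range k, z i| ≤ B) (n : ℕ) :
    |∑ i ∈ range n, c i * z i| ≤ B * c 0 := by
  rcases Nat.eq_zero_or_pos n with rfl | hn
  · simpa using mul_nonneg hB (hc0 0)
  have hby := Finset.sum_range_by_parts c z n
  simp only [smul_eq_mul] at hby
  rw [hby]
  have h2 : |∑ i ∈ range (n - 1), (c (i + 1) - c i) * ∑ j ∈ range (i + 1), z j|
      ≤ ∑ i ∈ range (n - 1), (c i - c (i + 1)) * B := by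
    refine (Finset.abs_sum_le_sum_abs _ _).trans (Finset.sum_le_sum fun i _ => ?_)
    rw [abs_mul, abs_sub_comm, abs_of_nonneg (sub_nonneg.mpr (hc (Nat.le_succ i)))]
    exact mul_le_mul_of_nonneg_left (hz _) (sub_nonneg.mpr (hc (Nat.le_succ i)))
  have h3 : ∑ i ∈ range (n - 1), (c i - c (i + 1)) * B = (c 0 - c (n - 1)) * B := by
    rw [← Finset.sum_mul, Finset.sum_range_sub' c (n - 1)]
  calc |c (n - 1) * ∑ i ∈ range n, z i
        - ∑ i ∈ range (n - 1), (c (i + 1) - c i) * ∑ j ∈ range (i + 1), z j|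
      ≤ c (n - 1) * B + (c 0 - c (n - 1)) * B := by
        refine (abs_sub _ _).trans ?_
        gcongr
        · rw [abs_mul, abs_of_nonneg (hc0 _)]
          exact mul_le_mul_of_nonneg_left (hz n) (hc0 _)
        · exact h2.trans_eq h3
    _ = B * c 0 := by ring

variable (p : ℕ) [Fact p.Prime]

/-- The Legendre symbol as a real-valued sequence. -/
noncomputable def a (n : ℕ) : ℝ := (legendreSym p (n : ℤ) : ℝ)

lemma a_zero : a p 0 = 0 := by simp [a, legendreSym.at_zero]

lemma a_one : a p 1 = 1 := by simp [a, legendreSym.at_one]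

lemma a_abs_le (n : ℕ) : |a p n| ≤ 1 := by
  unfold a
  by_cases h : ((n : ℤ) : ZMod p) = 0
  · rw [(legendreSym.eq_zero_iff p _).mpr h]; norm_num
  · rcases legendreSym.eq_one_or_neg_one p h with h1 | h1 <;> rw [h1] <;> norm_num

lemma sum_range_cast (g : ZMod p → ℝ) :
    ∑ i ∈ range p, g (i : ZMod p) = ∑ x : ZMod p, g x := by
  haveI : NeZero p := ⟨(Fact.out : p.Prime).ne_zero⟩
  rw [← Fin.sum_univ_eq_sum_range]
  refine Fintype.sum_bijective (fun i : Fin p => ((i : ℕ) : ZMod p)) ?_ _ _ (fun i => rfl)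
  rw [Fintype.bijective_iff_injective_and_card]
  refine ⟨fun i j h => ?_, by simp [ZMod.card]⟩
  have := congrArg ZMod.val h
  rw [ZMod.val_cast_of_lt i.isLt, ZMod.val_cast_of_lt j.isLt] at this; exact Fin.ext this

lemma a_eq (n : ℕ) : a p n = ((quadraticChar (ZMod p) ((n : ℕ) : ZMod p) : ℤ) : ℝ) := by
  simp [a, legendreSym]

variable (hodd : p ≠ 2)
include hodd

lemma hchar : ringChar (ZMod p) ≠ 2 := by
  rw [ZMod.ringChar_zmod_n]; exact hodd

/-- The sum of the Legendre symbol over any window of length `p` vanishes. -/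
lemma window (m : ℕ) : ∑ i ∈ range p, a p (m + i) = 0 := by
  have h1 : ∀ i : ℕ, a p (m + i)
      = (fun x : ZMod p => ((quadraticChar (ZMod p) ((m : ZMod p) + x) : ℤ) : ℝ)) (i : ZMod p) :=
    fun i => by rw [a_eq]; push_cast; ring_nf
  calc ∑ i ∈ range p, a p (m + i)
      = ∑ x : ZMod p, ((quadraticChar (ZMod p) ((m : ZMod p) + x) : ℤ) : ℝ) := by
        rw [← sum_range_cast]; exact Finset.sum_congr rfl fun i _ => h1 i
    _ = ∑ y : ZMod p, ((quadraticChar (ZMod p) y : ℤ) : ℝ) :=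
        Fintype.sum_equiv (Equiv.addLeft (m : ZMod p)) _ _ (fun x => rfl)
    _ = 0 := by
        rw [← Int.cast_sum, quadraticChar_sum_zero (hchar p hodd)]; norm_num

/-- The partial sums of the Legendre symbol are bounded by `p`. -/
lemma S_bound (n : ℕ) : |∑ i ∈ range n, a p i| ≤ p := by
  induction n using Nat.strong_induction_on with
  | _ n ih =>
    rcases lt_or_ge n p with h | h
    · calc |∑ i ∈ range n, a p i| ≤ ∑ i ∈ range n, |a p i| := Finset.abs_sum_le_sum_abs _ _
        _ ≤ ∑ _i ∈ range n, (1 : ℝ) := Finset.sum_le_sum fun i _ => a_abs_le p i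
        _ = n := by simp
        _ ≤ p := by exact_mod_cast h.le
    · obtain ⟨m, rfl⟩ : ∃ m, n = m + p := ⟨n - p, (Nat.sub_add_cancel h).symm⟩
      have hp : 0 < p := (Fact.out : p.Prime).pos
      have : ∑ i ∈ range (m + p), a p i = ∑ i ∈ range m, a p i := by
        rw [Finset.sum_range_add, window p hodd m, add_zero]
      rw [this]
      exact ih m (by omega)

/-- Partial sums of the Dirichlet series at real `σ`. -/
noncomputable def F (N : ℕ) (σ : ℝ) : ℝ := ∑ n ∈ range N, a p n * (n : ℝ) ^ (-σ)

lemma F_diff_bound {N M : ℕ} (hN : 1 ≤ N) (hNM : N ≤ M) {σ : ℝ} (hσ : 1 ≤ σ) :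
    |F p M σ - F p N σ| ≤ 2 * p / N := by
  have hrange : F p M σ - F p N σ
      = ∑ i ∈ range (M - N), a p (N + i) * ((N + i : ℕ) : ℝ) ^ (-σ) := by
    rw [F, F, ← Finset.sum_Ico_eq_sub _ hNM, Finset.sum_Ico_eq_sum_range]
  rw [hrange]
  have hc0 : (0:ℝ) ≤ 2 * p := by positivity
  have key : |∑ i ∈ range (M - N), ((N + i : ℕ) : ℝ) ^ (-σ) * a p (N + i)|
      ≤ (2 * p) * ((N : ℝ) ^ (-σ)) := by
    refine abel_bound hc0 (fun i j hij => ?_) (fun i => by positivity) (fun k => ?_) (M - N)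
    · rw [Real.rpow_neg (by positivity), Real.rpow_neg (by positivity)]
      have hbase : (0:ℝ) < ((N + i : ℕ) : ℝ) := by
        have : 0 < N + i := Nat.lt_of_lt_of_le Nat.zero_lt_one (le_trans hN (Nat.le_add_right N i))
        exact_mod_cast this
      refine inv_anti₀ (Real.rpow_pos_of_pos hbase _) ?_
      exact Real.rpow_le_rpow (by positivity) (by exact_mod_cast Nat.add_le_add_left hij N)
        (le_trans zero_le_one hσ)
    · have : ∑ i ∈ range k, a p (N + i)
          = (∑ i ∈ range (N + k), a p i) - ∑ i ∈ range N, a p i := by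
        rw [Finset.sum_range_add]; ring
      rw [this]
      calc |(∑ i ∈ range (N + k), a p i) - ∑ i ∈ range N, a p i|
          ≤ |∑ i ∈ range (N + k), a p i| + |∑ i ∈ range N, a p i| := abs_sub _ _
        _ ≤ (p : ℝ) + p := add_le_add (S_bound p hodd _) (S_bound p hodd _)
        _ = 2 * p := by ring
  have hNpos : (0:ℝ) < N := by exact_mod_cast hN
  calc |∑ i ∈ range (M - N), a p (N + i) * ((N + i : ℕ) : ℝ) ^ (-σ)|
      = |∑ i ∈ range (M - N), ((N + i : ℕ) : ℝ) ^ (-σ) * a p (N + i)| := by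
        congr 1; exact Finset.sum_congr rfl fun i _ => mul_comm _ _
    _ ≤ (2 * p) * ((N : ℝ) ^ (-σ)) := key
    _ ≤ (2 * p) * ((N : ℝ)⁻¹) := by
        refine mul_le_mul_of_nonneg_left ?_ hc0
        rw [Real.rpow_neg hNpos.le]
        refine inv_anti₀ (by positivity) ?_
        calc (N:ℝ) = (N:ℝ) ^ (1:ℝ) := (Real.rpow_one _).symm
          _ ≤ (N:ℝ) ^ σ := Real.rpow_le_rpow_of_exponent_le (by exact_mod_cast hN) hσ
    _ = 2 * p / N := by ring

lemma F_cauchy : UniformCauchySeqOn (F p) atTop (Set.Ici (1:ℝ)) := by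
  rw [Metric.uniformCauchySeqOn_iff]
  intro ε hε
  set K : ℕ := ⌈(2 * p : ℝ) / ε⌉₊ + 1 with hK
  have hK1 : 1 ≤ K := Nat.le_add_left 1 _
  have hKbig : ∀ n : ℕ, K ≤ n → 2 * (p:ℝ) / n < ε := by
    intro n hn
    have hn0 : (0:ℝ) < n := by
      exact_mod_cast lt_of_lt_of_le (Nat.lt_of_lt_of_le Nat.zero_lt_one hK1) hn
    rw [div_lt_iff₀ hn0]
    have h1 : (2 * (p:ℝ)) / ε < K := by
      have ha := Nat.le_ceil ((2 * (p:ℝ)) / ε)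
      have hb' : ⌈(2 * (p:ℝ)) / ε⌉₊ < K := by rw [hK]; exact Nat.lt_succ_self _
      have hb : ((⌈(2 * (p:ℝ)) / ε⌉₊ : ℕ) : ℝ) < ((K : ℕ) : ℝ) := by exact_mod_cast hb'
      linarith
    calc 2 * (p:ℝ) = (2 * p / ε) * ε := by field_simp
      _ < K * ε := by exact mul_lt_mul_of_pos_right h1 hε
      _ ≤ n * ε := by exact mul_le_mul_of_nonneg_right (by exact_mod_cast hn) hε.le
      _ = ε * n := mul_comm _ _
  refine ⟨K, fun m hm n hn σ hσ => ?_⟩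
  have hσ' : (1:ℝ) ≤ σ := hσ
  rw [Real.dist_eq]
  rcases le_total n m with h | h
  · calc |F p m σ - F p n σ| ≤ 2 * p / n := F_diff_bound p hodd (le_trans hK1 hn) h hσ'
      _ < ε := hKbig n hn
  · rw [abs_sub_comm]
    calc |F p n σ - F p m σ| ≤ 2 * p / m := F_diff_bound p hodd (le_trans hK1 hm) h hσ'
      _ < ε := hKbig m hm

omit hodd in
lemma F_continuous (N : ℕ) : ContinuousOn (F p N) (Set.Ici (1:ℝ)) := by
  refine Continuous.continuousOn ?_
  refine continuous_finset_sum _ fun n _ => ?_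
  rcases Nat.eq_zero_or_pos n with rfl | hn
  · have : (fun σ : ℝ => a p 0 * (0:ℕ) ^ (-σ)) = fun _ => 0 := by
      funext σ; simp [a, legendreSym.at_zero]
    rw [this]; exact continuous_const
  · have hpos : (0:ℝ) < n := by exact_mod_cast hn
    have : (fun σ : ℝ => a p n * (n:ℝ) ^ (-σ)) =
        fun σ : ℝ => a p n * Real.exp (Real.log n * (-σ)) := by
      funext σ; rw [Real.rpow_def_of_pos hpos]
    rw [this]
    fun_prop

/-- The quadratic Dirichlet character mod `p` with values in `ℂ`. -/
noncomputable def χ : DirichletCharacter ℂ p :=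
  (quadraticChar (ZMod p)).ringHomComp (Int.castRingHom ℂ)

lemma χ_ne_one : χ p ≠ 1 := by
  obtain ⟨u, hu⟩ := quadraticChar_exists_neg_one' (hchar p hodd)
  intro h
  have h1 : χ p u = 1 := by rw [h]; exact MulChar.one_apply u.isUnit
  have h2 : χ p u = -1 := by
    show ((quadraticChar (ZMod p) u : ℤ) : ℂ) = -1
    rw [hu]; norm_num
  rw [h1] at h2
  norm_num at h2

omit hodd in
lemma χ_nat (n : ℕ) : χ p (n : ZMod p) = ((a p n : ℝ) : ℂ) := by
  show ((quadraticChar (ZMod p) ((n : ℕ) : ZMod p) : ℤ) : ℂ) = _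
  rw [a, legendreSym]
  push_cast
  norm_num

omit hodd in
lemma summable_aσ {σ : ℝ} (hσ : 1 < σ) : Summable (fun n : ℕ => a p n * (n : ℝ) ^ (-σ)) := by
  have h1 : Summable (fun n : ℕ => ((n : ℝ) ^ σ)⁻¹) := Real.summable_nat_rpow_inv.mpr hσ
  refine Summable.of_abs (h1.of_nonneg_of_le (fun n => abs_nonneg _) fun n => ?_)
  calc |a p n * (n:ℝ) ^ (-σ)| = |a p n| * (n:ℝ) ^ (-σ) := by
        rw [abs_mul, abs_of_nonneg (Real.rpow_nonneg (Nat.cast_nonneg n) _)]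
    _ = |a p n| * ((n:ℝ) ^ σ)⁻¹ := by rw [Real.rpow_neg (Nat.cast_nonneg n)]
    _ ≤ 1 * ((n:ℝ) ^ σ)⁻¹ := mul_le_mul_of_nonneg_right (a_abs_le p n) (by positivity)
    _ = ((n:ℝ) ^ σ)⁻¹ := one_mul _

omit hodd in
lemma LFunction_eq {σ : ℝ} (hσ : 1 < σ) :
    DirichletCharacter.LFunction (χ p) σ = ((∑' n : ℕ, a p n * (n : ℝ) ^ (-σ) : ℝ) : ℂ) := by
  rw [DirichletCharacter.LFunction_eq_LSeries _ (by simpa using hσ)]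
  rw [Complex.ofReal_tsum]
  rw [LSeries]
  congr 1
  funext n
  rcases Nat.eq_zero_or_pos n with rfl | hn
  · rw [LSeries.term_zero]
    simp [a, legendreSym.at_zero]
  · rw [LSeries.term_of_ne_zero hn.ne']
    have hn0 : (0:ℝ) < n := by exact_mod_cast hn
    rw [χ_nat p n, Real.rpow_neg hn0.le, Complex.ofReal_mul, Complex.ofReal_inv,
      Complex.ofReal_cpow hn0.le, div_eq_mul_inv]
    norm_num

omit [Fact p.Prime] hodd in
lemma telescope : HasSum (fun n : ℕ => (1:ℝ)/(n+1) - 1/(n+2)) 1 := by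
  have hnn : ∀ n : ℕ, 0 ≤ (1:ℝ)/(n+1) - 1/(n+2) := by
    intro n
    have h1 : (0:ℝ) < n + 1 := by positivity
    have h2 : (0:ℝ) < n + 2 := by positivity
    rw [sub_nonneg, div_le_div_iff₀ h2 h1]
    linarith
  rw [hasSum_iff_tendsto_nat_of_nonneg hnn]
  have hps : ∀ N : ℕ, ∑ i ∈ range N, ((1:ℝ)/(i+1) - 1/(i+2)) = 1 - 1/(N+1) := by
    intro N
    have := Finset.sum_range_sub' (fun k : ℕ => (1:ℝ)/(k+1)) N
    calc ∑ i ∈ range N, ((1:ℝ)/(i+1) - 1/(i+2))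
        = ∑ i ∈ range N, ((fun k : ℕ => (1:ℝ)/(k+1)) i - (fun k : ℕ => (1:ℝ)/(k+1)) (i+1)) := by
          refine Finset.sum_congr rfl fun i _ => ?_
          push_cast; ring_nf
      _ = 1 - 1/(N+1) := by rw [this]; norm_num
  simp only [hps]
  have : Tendsto (fun N : ℕ => 1/((N:ℝ)+1)) atTop (𝓝 0) := tendsto_one_div_add_atTop_nhds_zero_nat
  simpa using (tendsto_const_nhds (x := (1:ℝ))).sub this

omit hodd in
lemma G4_bound : (3/4 : ℝ) ≤ ∑' n : ℕ, a p n * (n : ℝ) ^ (-(4:ℝ)) := by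
  set f : ℕ → ℝ := fun n => a p n * (n : ℝ) ^ (-(4:ℝ)) with hf
  have hsum : Summable f := summable_aσ p (by norm_num)
  have hsum1 : Summable (fun n => f (n + 1)) := (summable_nat_add_iff 1).mpr hsum
  have hsum2 : Summable (fun n => f (n + 2)) := (summable_nat_add_iff 2).mpr hsum
  have e1 : ∑' n, f n = f 0 + ∑' n, f (n + 1) := Summable.tsum_eq_zero_add hsum
  have e2 : ∑' n, f (n + 1) = f 1 + ∑' n, f (n + 1 + 1) := Summable.tsum_eq_zero_add hsum1
  have hf0 : f 0 = 0 := by simp [hf, a_zero]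
  have hf1 : f 1 = 1 := by simp [hf, a_one p]
  have hbound : ∀ n : ℕ, |f (n + 2)| ≤ (1/4) * ((1:ℝ)/(n+1) - 1/(n+2)) := by
    intro n
    have key : ((n:ℝ)+2) ^ (-(4:ℝ)) ≤ (1/4) * ((1:ℝ)/(n+1) - 1/(n+2)) := by
      have hrpow : ((n:ℝ)+2) ^ (-(4:ℝ)) = (((n:ℝ)+2) ^ (4:ℕ))⁻¹ := by
        rw [Real.rpow_neg (by positivity)]
        rw [show (4:ℝ) = ((4:ℕ):ℝ) by norm_num, Real.rpow_natCast]
      rw [hrpow]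
      have hrhs : (1/4) * ((1:ℝ)/(n+1) - 1/(n+2)) = (4 * ((n:ℝ)+1) * ((n:ℝ)+2))⁻¹ := by
        field_simp
        ring
      rw [hrhs]
      refine inv_anti₀ (by positivity) ?_
      nlinarith [sq_nonneg ((n:ℝ)), sq_nonneg ((n:ℝ)+1)]
    calc |f (n + 2)| = |a p (n+2)| * ((n:ℝ)+2) ^ (-(4:ℝ)) := by
          rw [hf, abs_mul, abs_of_nonneg (Real.rpow_nonneg (by positivity) _)]
          push_cast
          ring_nf
      _ ≤ 1 * ((n:ℝ)+2) ^ (-(4:ℝ)) :=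
          mul_le_mul_of_nonneg_right (a_abs_le p _) (Real.rpow_nonneg (by positivity) _)
      _ = ((n:ℝ)+2) ^ (-(4:ℝ)) := one_mul _
      _ ≤ (1/4) * ((1:ℝ)/(n+1) - 1/(n+2)) := key
  have hg : HasSum (fun n : ℕ => (1/4 : ℝ) * ((1:ℝ)/(n+1) - 1/(n+2))) (1/4) := by
    simpa using (telescope).mul_left (1/4 : ℝ)
  have habs : Summable (fun n => |f (n + 2)|) :=
    hg.summable.of_nonneg_of_le (fun n => abs_nonneg _) hbound
  have hT : |∑' n, f (n + 2)| ≤ 1/4 := by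
    calc |∑' n, f (n + 2)| = ‖∑' n, f (n + 2)‖ := (Real.norm_eq_abs _).symm
      _ ≤ ∑' n, ‖f (n + 2)‖ := norm_tsum_le_tsum_norm (by simpa [Real.norm_eq_abs] using habs)
      _ = ∑' n, |f (n + 2)| := by simp [Real.norm_eq_abs]
      _ ≤ ∑' n : ℕ, (1/4 : ℝ) * ((1:ℝ)/(n+1) - 1/(n+2)) :=
          Summable.tsum_le_tsum hbound habs hg.summable
      _ = 1/4 := hg.tsum_eq
  have hfin : ∑' n, f n = 1 + ∑' n, f (n + 2) := by
    rw [e1, hf0, zero_add, e2, hf1]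
  rw [hf] at hfin ⊢
  rw [hfin]
  have := abs_le.mp hT
  linarith [this.1]

theorem main :
    ∃ ℓ : ℝ, Filter.Tendsto
      (fun N => ∑ n ∈ Finset.range N, (legendreSym p (n : ℤ) : ℝ) / n)
      Filter.atTop (nhds ℓ) ∧ 0 < ℓ := by
  have h1mem : (1:ℝ) ∈ Set.Ici (1:ℝ) := Set.mem_Ici.mpr le_rfl
  obtain ⟨ℓ, hℓ⟩ : ∃ ℓ : ℝ, Tendsto (fun N => F p N 1) atTop (𝓝 ℓ) :=
    cauchySeq_tendsto_of_complete ((F_cauchy p hodd).cauchySeq h1mem)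
  set G : ℝ → ℝ := fun σ => if 1 < σ then ∑' n : ℕ, a p n * (n : ℝ) ^ (-σ) else ℓ with hG
  have htend : ∀ σ ∈ Set.Ici (1:ℝ), Tendsto (fun N => F p N σ) atTop (𝓝 (G σ)) := by
    intro σ hσ
    rcases lt_or_eq_of_le (Set.mem_Ici.mp hσ) with hσ1 | hσ1
    · have hs := summable_aσ p hσ1
      have : G σ = ∑' n : ℕ, a p n * (n : ℝ) ^ (-σ) := if_pos hσ1
      rw [this]
      exact hs.hasSum.tendsto_sum_nat
    · have : G σ = ℓ := by rw [hG]; simp [← hσ1]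
      rw [this, ← hσ1]
      exact hℓ
  have hunif : TendstoUniformlyOn (F p) G atTop (Set.Ici (1:ℝ)) :=
    (F_cauchy p hodd).tendstoUniformlyOn_of_tendsto htend
  have hcont : ContinuousOn G (Set.Ici (1:ℝ)) :=
    hunif.continuousOn (Frequently.of_forall fun N => F_continuous p N)
  have hG1 : G 1 = ℓ := by rw [hG]; simp
  have hident : ∀ σ : ℝ, 1 < σ → DirichletCharacter.LFunction (χ p) σ = ((G σ : ℝ) : ℂ) := by
    intro σ hσ
    rw [LFunction_eq p hσ, hG]
    simp [hσ]
  have hLcont : Tendsto (fun σ : ℝ => DirichletCharacter.LFunction (χ p) σ)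
      (𝓝[>] (1:ℝ)) (𝓝 (DirichletCharacter.LFunction (χ p) 1)) := by
    have h1 : ContinuousAt (DirichletCharacter.LFunction (χ p)) 1 :=
      (DirichletCharacter.differentiableAt_LFunction (χ p) 1
        (Or.inr (χ_ne_one p hodd))).continuousAt
    have h2 : Tendsto (fun σ : ℝ => (σ : ℂ)) (𝓝[>] (1:ℝ)) (𝓝 (1:ℂ)) := by
      have := (Complex.continuous_ofReal.tendsto 1).mono_left
        (nhdsWithin_le_nhds (s := Set.Ioi (1:ℝ)))
      simpa using this
    exact h1.tendsto.comp h2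
  have hGto : Tendsto (fun σ : ℝ => DirichletCharacter.LFunction (χ p) σ)
      (𝓝[>] (1:ℝ)) (𝓝 ((ℓ : ℝ) : ℂ)) := by
    have hGc : Tendsto G (𝓝[>] (1:ℝ)) (𝓝 ℓ) := by
      have h := (hcont 1 h1mem).tendsto
      have hmono : 𝓝[>] (1:ℝ) ≤ 𝓝[Set.Ici 1] (1:ℝ) := nhdsWithin_mono _ Set.Ioi_subset_Ici_self
      rw [← hG1]
      exact h.mono_left hmono
    have hcast : Tendsto (fun σ : ℝ => ((G σ : ℝ) : ℂ)) (𝓝[>] (1:ℝ)) (𝓝 ((ℓ : ℝ) : ℂ)) :=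
      (Complex.continuous_ofReal.tendsto ℓ).comp hGc
    refine hcast.congr' ?_
    filter_upwards [self_mem_nhdsWithin] with σ hσ
    exact (hident σ hσ).symm
  have hL1 : DirichletCharacter.LFunction (χ p) 1 = ((ℓ : ℝ) : ℂ) :=
    tendsto_nhds_unique hLcont hGto
  have hnonzero : ∀ σ ∈ Set.Ici (1:ℝ), G σ ≠ 0 := by
    intro σ hσ hzero
    rcases lt_or_eq_of_le (Set.mem_Ici.mp hσ) with hσ1 | hσ1
    · have := DirichletCharacter.LFunction_ne_zero_of_one_le_re (χ p)
        (Or.inl (χ_ne_one p hodd)) (s := (σ:ℂ)) (by simp [hσ1.le])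
      rw [hident σ hσ1, hzero] at this
      simp at this
    · have := DirichletCharacter.LFunction_ne_zero_of_one_le_re (χ p)
        (Or.inl (χ_ne_one p hodd)) (s := (1:ℂ)) (by simp)
      rw [hL1] at this
      rw [← hσ1, hG1] at hzero
      rw [hzero] at this
      simp at this
  have hG4 : (3/4 : ℝ) ≤ G 4 := by
    have : G 4 = ∑' n : ℕ, a p n * (n : ℝ) ^ (-(4:ℝ)) := if_pos (by norm_num)
    rw [this]
    exact G4_bound p
  have hℓpos : 0 < ℓ := by
    by_contra hneg
    push_neg at hneg
    have h0mem : (0:ℝ) ∈ Set.Icc (G 1) (G 4) := by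
      constructor
      · rw [hG1]; exact hneg
      · linarith
    have hsub : Set.Icc (G 1) (G 4) ⊆ G '' Set.Icc 1 4 :=
      intermediate_value_Icc (by norm_num) (hcont.mono (fun x hx => le_trans (by norm_num) hx.1))
    obtain ⟨c, hc, hGc⟩ := hsub h0mem
    exact hnonzero c (Set.mem_Ici.mpr hc.1) hGc
  refine ⟨ℓ, ?_, hℓpos⟩
  have heq : (fun N => ∑ n ∈ Finset.range N, (legendreSym p (n : ℤ) : ℝ) / n)
      = fun N => F p N 1 := by
    funext N
    rw [F]
    refine Finset.sum_congr rfl fun n _ => ?_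
    rw [Real.rpow_neg_one, div_eq_mul_inv, a]
  rw [heq]
  exact hℓ

end LOneQuad

/-- Dirichlet §4: L(1,χ) = Σ (n/p)/n is positive for the quadratic character mod p. -/
theorem L_one_quadratic_pos (p : ℕ) [Fact p.Prime] (hodd : p ≠ 2) :
    ∃ ℓ : ℝ, Filter.Tendsto
      (fun N => ∑ n ∈ Finset.range N, (legendreSym p (n : ℤ) : ℝ) / n)
      Filter.atTop (nhds ℓ) ∧ 0 < ℓ :=
  LOneQuad.main p hodd
end
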